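/- Positivity construction in Proposition 2's proof: let 𝒩* be an intersection-closed no-orphan cover of finite 𝒩 with at least two maximal elements (root units), with alphabet sizes |Xᵢ| ≥ 2, and let T = ⋃_{ω maximal} ω̄. Define p on ∏ᵢ Xᵢ by fixing all coordinates outside T to a constant and setting the coordinates in T perfectly correlated and uniform over M := minᵢ|Xᵢ| joint values. Then the in-ex information of p with respect to 𝒩* equals (R-1)·ln M > 0, where R ≥ 2 is the number of maximal units. -/

import Mathlib

open BigOperators

noncomputable def shannonEntropy {α : Type*} [Fintype α] (q : α → ℝ) : ℝ :=
  -∑ a, q a * Real.log (q a)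

/-- Marginal of a distribution on `∏ i, Fin (m i)` over the subsystems in `ω`. -/
noncomputable def marginal {n : ℕ} (m : Fin n → ℕ)
    (p : (∀ i, Fin (m i)) → ℝ) (ω : Finset (Fin n)) :
    (∀ i : ω, Fin (m i.1)) → ℝ :=
  fun y => ∑ x, if (∀ i : ω, x i.1 = y i) then p x else 0

/-- Inclusion-exclusion sum of `σ` over a family of units. -/
noncomputable def inExSum {n : ℕ} (σ : Finset (Fin n) → ℝ)
    (F : Finset (Finset (Fin n))) : ℝ :=
  ∑ J ∈ F.powerset.filter (fun J => J.Nonempty),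
    (-1 : ℝ) ^ (J.card + 1) * σ (J.inf id)

/-- In-ex information of a distribution with respect to a family of units. -/
noncomputable def inExInfo {n : ℕ} (m : Fin n → ℕ)
    (p : (∀ i, Fin (m i)) → ℝ) (F : Finset (Finset (Fin n))) : ℝ :=
  inExSum (fun ω => shannonEntropy (marginal m p ω)) F - shannonEntropy p

/-- The maximal (root) units of a family. -/
def rootUnits {n : ℕ} (F : Finset (Finset (Fin n))) : Finset (Finset (Fin n)) :=
  F.filter (fun ω => ∀ ω' ∈ F, ¬ ω ⊂ ω')

/-- The exclusive part `ω̄` of a unit: elements in no proper sub-member. -/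
def exclusivePart {n : ℕ} (F : Finset (Finset (Fin n))) (ω : Finset (Fin n)) :
    Finset (Fin n) :=
  ω \ (F.filter (· ⊂ ω)).sup id

lemma entropy_uniform {α : Type*} [Fintype α] (P : α → Prop) [DecidablePred P]
    (M : ℕ) (hM : 0 < M) (hcard : (Finset.univ.filter P).card = M) :
    shannonEntropy (fun a => if P a then (M : ℝ)⁻¹ else 0) = Real.log M := by
  have key : ∀ a : α, (if P a then (M:ℝ)⁻¹ else 0) * Real.log (if P a then (M:ℝ)⁻¹ else 0)
      = if P a then (M:ℝ)⁻¹ * Real.log (M:ℝ)⁻¹ else 0 := by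
    intro a; split_ifs <;> simp
  have hM0 : (M : ℝ) ≠ 0 := Nat.cast_ne_zero.mpr hM.ne'
  unfold shannonEntropy
  simp only [key, Finset.sum_ite, Finset.sum_const, hcard, Finset.sum_const_zero, add_zero,
    nsmul_eq_mul, Real.log_inv]
  field_simp
  simp

lemma mem_exclusivePart {n : ℕ} {F : Finset (Finset (Fin n))} {ω : Finset (Fin n)}
    {i : Fin n} : i ∈ exclusivePart F ω ↔ i ∈ ω ∧ ∀ ω' ∈ F, ω' ⊂ ω → i ∉ ω' := by
  simp only [exclusivePart, Finset.mem_sdiff, Finset.mem_sup, Finset.mem_filter, id]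
  constructor
  · rintro ⟨h1, h2⟩
    exact ⟨h1, fun ω' hω' hss hi => h2 ⟨ω', ⟨hω', hss⟩, hi⟩⟩
  · rintro ⟨h1, h2⟩
    exact ⟨h1, fun ⟨ω', ⟨hω', hss⟩, hi⟩ => h2 ω' hω' hss hi⟩

lemma only_unit {n : ℕ} {F : Finset (Finset (Fin n))}
    (hclosed : ∀ ω ∈ F, ∀ ω' ∈ F, (ω ∩ ω').Nonempty → ω ∩ ω' ∈ F)
    {ω₀ : Finset (Fin n)} (hω₀ : ω₀ ∈ rootUnits F) {i : Fin n}
    (hi : i ∈ exclusivePart F ω₀) {ω : Finset (Fin n)} (hω : ω ∈ F) (hiω : i ∈ ω) :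
    ω = ω₀ := by
  obtain ⟨hω₀F, hroot⟩ := Finset.mem_filter.mp hω₀
  obtain ⟨hiω₀, hexcl⟩ := mem_exclusivePart.mp hi
  have hint : ω ∩ ω₀ ∈ F :=
    hclosed ω hω ω₀ hω₀F ⟨i, Finset.mem_inter.mpr ⟨hiω, hiω₀⟩⟩
  have hsub : ω ∩ ω₀ ⊆ ω₀ := Finset.inter_subset_right
  have heq : ω ∩ ω₀ = ω₀ := by
    by_contra hne
    exact hexcl _ hint (ssubset_of_subset_of_ne hsub hne) (Finset.mem_inter.mpr ⟨hiω, hiω₀⟩)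
  have hsub2 : ω₀ ⊆ ω := heq ▸ Finset.inter_subset_left
  by_contra hne
  exact hroot ω hω (ssubset_of_subset_of_ne hsub2 (Ne.symm hne))

/-- Positivity construction of Proposition 2: for an intersection-closed,
no-orphan cover with `R ≥ 2` root units, alphabets of size `≥ 2`, and the
distribution that fixes the coordinates outside `T = ⋃_{ω root} ω̄` and sets
the coordinates in `T` perfectly correlated and uniform over `M = minᵢ|Xᵢ|`
joint values, the in-ex information equals `(R-1)·ln M > 0`. -/
theorem positivity_construction {n : ℕ} (m : Fin n → ℕ) (hm : ∀ i, 2 ≤ m i)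
    (F : Finset (Finset (Fin n)))
    (hcover : F.sup id = Finset.univ)
    (hne : ∀ ω ∈ F, ω.Nonempty)
    (hclosed : ∀ ω ∈ F, ∀ ω' ∈ F, (ω ∩ ω').Nonempty → ω ∩ ω' ∈ F)
    (horphan : ∀ ω ∈ F, ∃ i ∈ ω, ∀ ω' ∈ F, ω' ⊂ ω → i ∉ ω')
    (hR : 2 ≤ (rootUnits F).card)
    (M : ℕ) (hM1 : ∀ i, M ≤ m i) (hM2 : ∃ i, m i = M)
    (c : ∀ i, Fin (m i))
    (p : (∀ i, Fin (m i)) → ℝ)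
    (hp : ∀ x, p x =
      if (∃ k : Fin M, ∀ i ∈ (rootUnits F).sup (exclusivePart F), (x i : ℕ) = (k : ℕ)) ∧
         (∀ i ∉ (rootUnits F).sup (exclusivePart F), x i = c i)
      then (M : ℝ)⁻¹ else 0) :
    inExInfo m p F = (((rootUnits F).card : ℝ) - 1) * Real.log M ∧
    0 < inExInfo m p F := by
  classical
  set T : Finset (Fin n) := (rootUnits F).sup (exclusivePart F) with hTdef
  -- basic numerics
  have hM2' : 2 ≤ M := by obtain ⟨i, hi⟩ := hM2; exact hi ▸ hm i
  have hMpos : 0 < M := by omega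
  -- exclusive parts of members of F are nonempty
  have hexne : ∀ ω ∈ F, (exclusivePart F ω).Nonempty := by
    intro ω hω
    obtain ⟨i, hiω, hi⟩ := horphan ω hω
    exact ⟨i, mem_exclusivePart.mpr ⟨hiω, hi⟩⟩
  have hmemT : ∀ {i : Fin n}, i ∈ T ↔ ∃ ω ∈ rootUnits F, i ∈ exclusivePart F ω := by
    intro i; simp [hTdef, Finset.mem_sup]
  -- T is nonempty
  have hTne : T.Nonempty := by
    obtain ⟨ω₀, hω₀⟩ := Finset.card_pos.mp (by omega : 0 < (rootUnits F).card)
    obtain ⟨i, hi⟩ := hexne ω₀ (Finset.mem_filter.mp hω₀).1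
    exact ⟨i, hmemT.mpr ⟨ω₀, hω₀, hi⟩⟩
  obtain ⟨i₀, hi₀T⟩ := hTne
  -- the support points
  obtain ⟨xpt, hxpt_val, hxpt_not⟩ : ∃ xpt : Fin M → ∀ i, Fin (m i),
      (∀ (k : Fin M) (i : Fin n), i ∈ T → (xpt k i : ℕ) = (k : ℕ)) ∧
      (∀ (k : Fin M) (i : Fin n), i ∉ T → xpt k i = c i) := by
    refine ⟨fun k i => if h : i ∈ T then ⟨(k : ℕ), lt_of_lt_of_le k.2 (hM1 i)⟩ else c i,
      ?_, ?_⟩ <;> intro k i hi <;> simp [hi]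
  have hxpt_inj : Function.Injective xpt := by
    intro k k' h
    apply Fin.ext
    rw [← hxpt_val k i₀ hi₀T, ← hxpt_val k' i₀ hi₀T, h]
  -- rewrite p
  have hp' : p = fun x => if ∃ k : Fin M, x = xpt k then (M : ℝ)⁻¹ else 0 := by
    funext x
    rw [hp x]
    congr 1
    apply propext
    constructor
    · rintro ⟨⟨k, hk⟩, hc⟩
      refine ⟨k, funext fun i => ?_⟩
      by_cases hi : i ∈ T
      · exact Fin.ext (by rw [hk i hi, hxpt_val k i hi])
      · rw [hc i hi, hxpt_not k i hi]
    · rintro ⟨k, rfl⟩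
      exact ⟨⟨k, fun i hi => hxpt_val k i hi⟩, fun i hi => hxpt_not k i hi⟩
  -- support as an image
  have hfilter_img : (Finset.univ.filter (fun x => ∃ k : Fin M, x = xpt k))
      = Finset.univ.image xpt := by
    ext x; simp [eq_comm]
  -- entropy of p
  have hHp : shannonEntropy p = Real.log M := by
    rw [hp']
    refine entropy_uniform (fun x => ∃ k : Fin M, x = xpt k) M hMpos ?_
    rw [hfilter_img, Finset.card_image_of_injective _ hxpt_inj, Finset.card_univ,
      Fintype.card_fin]
  -- the marginal as a sum over k
  have hmarg : ∀ ω : Finset (Fin n), marginal m p ω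
      = fun y => ∑ k : Fin M, if (∀ i : ω, xpt k i.1 = y i) then (M : ℝ)⁻¹ else 0 := by
    intro ω
    funext y
    unfold marginal
    rw [hp']
    have : ∀ x : ∀ i, Fin (m i),
        (if (∀ i : ω, x i.1 = y i) then (if ∃ k : Fin M, x = xpt k then (M:ℝ)⁻¹ else 0) else 0)
        = if ∃ k : Fin M, x = xpt k then (if (∀ i : ω, x i.1 = y i) then (M:ℝ)⁻¹ else 0)
          else 0 := by
      intro x; split_ifs <;> rfl
    rw [Finset.sum_congr rfl (fun x _ => this x), ← Finset.sum_filter, hfilter_img,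
      Finset.sum_image (fun a _ b _ h => hxpt_inj h)]
  -- entropy of marginals
  have hH : ∀ ω : Finset (Fin n), shannonEntropy (marginal m p ω)
      = if (ω ∩ T).Nonempty then Real.log M else 0 := by
    intro ω
    by_cases hωT : (ω ∩ T).Nonempty
    · rw [if_pos hωT]
      obtain ⟨j, hj⟩ := hωT
      have hjω : j ∈ ω := (Finset.mem_inter.mp hj).1
      have hjT : j ∈ T := (Finset.mem_inter.mp hj).2
      -- marginal is uniform over the image of the restriction map
      have huniq : ∀ (y : ∀ i : ω, Fin (m i.1)) (k k' : Fin M),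
          (∀ i : ω, xpt k i.1 = y i) → (∀ i : ω, xpt k' i.1 = y i) → k = k' := by
        intro y k k' h1 h2
        have h3 := (h1 ⟨j, hjω⟩).trans (h2 ⟨j, hjω⟩).symm
        apply Fin.ext
        rw [← hxpt_val k j hjT, ← hxpt_val k' j hjT, h3]
      have hr_inj : Function.Injective (fun k : Fin M => fun i : ω => xpt k i.1) := by
        intro k k' h
        exact huniq (fun i => xpt k' i.1) k k' (fun i => congrFun h i) (fun i => rfl)
      have hmargω : marginal m p ω
          = fun y => if (∃ k : Fin M, ∀ i : ω, xpt k i.1 = y i) then (M : ℝ)⁻¹ else 0 := by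
        rw [hmarg ω]
        funext y
        by_cases h : ∃ k : Fin M, ∀ i : ω, xpt k i.1 = y i
        · obtain ⟨k₀, hk₀⟩ := h
          rw [if_pos ⟨k₀, hk₀⟩]
          have : ∀ k : Fin M, (∀ i : ω, xpt k i.1 = y i) ↔ k = k₀ := by
            intro k
            exact ⟨fun h' => huniq y k k₀ h' hk₀, fun h' => h' ▸ hk₀⟩
          simp only [this]
          simp
        · rw [if_neg h]
          refine Finset.sum_eq_zero fun k _ => ?_
          rw [if_neg (fun hk => h ⟨k, hk⟩)]
      rw [hmargω]
      refine entropy_uniform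
        (fun y : ∀ i : ω, Fin (m i.1) => ∃ k : Fin M, ∀ i : ω, xpt k i.1 = y i) M hMpos ?_
      have : (Finset.univ.filter
          (fun y : ∀ i : ω, Fin (m i.1) => ∃ k : Fin M, ∀ i : ω, xpt k i.1 = y i))
          = Finset.univ.image (fun k : Fin M => fun i : ω => xpt k i.1) := by
        ext y
        rw [Finset.mem_filter, Finset.mem_image]
        constructor
        · rintro ⟨-, k, hk⟩; exact ⟨k, Finset.mem_univ k, funext hk⟩
        · rintro ⟨k, -, rfl⟩; exact ⟨Finset.mem_univ _, k, fun i => rfl⟩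
      rw [this, Finset.card_image_of_injective _ hr_inj, Finset.card_univ, Fintype.card_fin]
    · rw [if_neg hωT]
      have hnotT : ∀ i : ω, i.1 ∉ T := by
        intro i hi
        exact hωT ⟨i.1, Finset.mem_inter.mpr ⟨i.2, hi⟩⟩
      have hmargω : marginal m p ω
          = fun y => if (∀ i : ω, c i.1 = y i) then ((1:ℕ) : ℝ)⁻¹ else 0 := by
        rw [hmarg ω]
        funext y
        have : ∀ k : Fin M, (∀ i : ω, xpt k i.1 = y i) ↔ (∀ i : ω, c i.1 = y i) := by
          intro k
          constructor <;> intro h i <;>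
            [rw [← hxpt_not k i.1 (hnotT i)]; rw [hxpt_not k i.1 (hnotT i)]] <;> exact h i
        simp only [this]
        rw [Finset.sum_ite, Finset.sum_const, Finset.sum_const_zero, add_zero]
        split_ifs with h
        · have : (Finset.univ.filter (fun _ : Fin M => ∀ i : ω, c i.1 = y i))
              = Finset.univ := by
            apply Finset.filter_true_of_mem; intro k _; exact h
          rw [Finset.filter_const, if_pos h]
          simp [Finset.card_univ]
          rw [mul_inv_cancel₀ (Nat.cast_ne_zero.mpr hMpos.ne')]
        · rw [Finset.filter_const, if_neg h]
          simp
      rw [hmargω]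
      have hcard1 : (Finset.univ.filter
          (fun y : ∀ i : ω, Fin (m i.1) => ∀ i : ω, c i.1 = y i)).card = 1 := by
        have : (Finset.univ.filter (fun y : ∀ i : ω, Fin (m i.1) => ∀ i : ω, c i.1 = y i))
            = {fun i : ω => c i.1} := by
          ext y
          simp only [Finset.mem_filter, Finset.mem_univ, true_and, Finset.mem_singleton]
          constructor
          · intro h; exact (funext fun i => h i).symm
          · rintro rfl; intro i; rfl
        rw [this, Finset.card_singleton]
      have h2 := entropy_uniform (fun y : ∀ i : ω, Fin (m i.1) => ∀ i : ω, c i.1 = y i)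
        1 one_pos hcard1
      simpa using h2
  -- the inclusion-exclusion sum
  have hmeets : (F.powerset.filter (fun J => J.Nonempty)).filter
      (fun J => ((J.inf id) ∩ T).Nonempty)
      = (rootUnits F).image (fun ω => ({ω} : Finset (Finset (Fin n)))) := by
    ext J
    simp only [Finset.mem_filter, Finset.mem_powerset, Finset.mem_image]
    constructor
    · rintro ⟨⟨hJF, hJne⟩, hJT⟩
      obtain ⟨i, hi⟩ := hJT
      have hiinf : i ∈ J.inf id := (Finset.mem_inter.mp hi).1
      have hiT : i ∈ T := (Finset.mem_inter.mp hi).2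
      obtain ⟨ω₀, hω₀root, hiex⟩ := hmemT.mp hiT
      refine ⟨ω₀, hω₀root, ?_⟩
      symm
      rw [Finset.eq_singleton_iff_nonempty_unique_mem]
      refine ⟨hJne, fun ω hω => ?_⟩
      have hωF : ω ∈ F := hJF hω
      have hiω : i ∈ ω := (Finset.inf_le hω : J.inf id ≤ id ω) hiinf
      exact only_unit hclosed hω₀root hiex hωF hiω
    · rintro ⟨ω, hωroot, rfl⟩
      have hωF : ω ∈ F := (Finset.mem_filter.mp hωroot).1
      obtain ⟨i, hi⟩ := hexne ω hωF
      have hiT : i ∈ T := hmemT.mpr ⟨ω, hωroot, hi⟩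
      have hiω : i ∈ ω := (mem_exclusivePart.mp hi).1
      refine ⟨⟨Finset.singleton_subset_iff.mpr hωF, Finset.singleton_nonempty ω⟩, ?_⟩
      rw [Finset.inf_singleton]
      exact ⟨i, Finset.mem_inter.mpr ⟨hiω, hiT⟩⟩
  have hsum : inExSum (fun ω => shannonEntropy (marginal m p ω)) F
      = ((rootUnits F).card : ℝ) * Real.log M := by
    unfold inExSum
    have step1 : ∀ J ∈ F.powerset.filter (fun J => J.Nonempty),
        (-1 : ℝ) ^ (J.card + 1) * shannonEntropy (marginal m p (J.inf id))
        = if ((J.inf id) ∩ T).Nonempty then (-1 : ℝ) ^ (J.card + 1) * Real.log M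
          else 0 := by
      intro J _
      rw [hH (J.inf id)]
      split_ifs <;> simp
    rw [Finset.sum_congr rfl step1, ← Finset.sum_filter, hmeets,
      Finset.sum_image (fun a _ b _ h => Finset.singleton_injective h)]
    simp [Finset.sum_const, Finset.card_singleton]
  -- conclusion
  have heq : inExInfo m p F = (((rootUnits F).card : ℝ) - 1) * Real.log M := by
    unfold inExInfo
    rw [hsum, hHp]; ring
  refine ⟨heq, ?_⟩
  rw [heq]
  apply mul_pos
  · have : (2 : ℝ) ≤ ((rootUnits F).card : ℝ) := by exact_mod_cast hR
    linarith
  · exact Real.log_pos (by exact_mod_cast hM2')
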